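/- Let T be a tree of order m ≥ 2 and n ≥ 2. Then mr_+^R(K_n ∘ T) = mr_+^C(K_n ∘ T) = nm − n + 1, where K_n ∘ T is the corona product of the complete graph K_n with T. -/

import Mathlib

open scoped ComplexOrder

/-- The minimum positive semidefinite rank of a simple graph `G` over the field `𝕜`
(`𝕜 = ℝ` gives `mr₊^ℝ`, `𝕜 = ℂ` gives `mr₊^ℂ`): the minimum rank over all positive
semidefinite Hermitian matrices whose off-diagonal zero/nonzero pattern matches `G`. -/
noncomputable def mrPlus (𝕜 : Type) [RCLike 𝕜] {V : Type} [Fintype V] [DecidableEq V]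
    (G : SimpleGraph V) : ℕ :=
  sInf {r : ℕ | ∃ A : Matrix V V 𝕜, A.PosSemidef ∧
    (∀ i j : V, i ≠ j → (A i j ≠ 0 ↔ G.Adj i j)) ∧ A.rank = r}

/-- `G` is a frame graph in the `d`-dimensional inner 𝕜 product space over `𝕜`:
there is a spanning family (frame) `f` indexed by the vertices such that distinct
vertices are adjacent iff the corresponding vectors are non-orthogonal. -/
def IsFrameGraphIn (𝕜 : Type) [RCLike 𝕜] {V : Type} (G : SimpleGraph V) (d : ℕ) : Prop :=
  ∃ f : V → EuclideanSpace 𝕜 (Fin d),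
    Submodule.span 𝕜 (Set.range f) = ⊤ ∧
    ∀ i j : V, i ≠ j → ((inner 𝕜 (f i) (f j) : 𝕜) ≠ 0 ↔ G.Adj i j)

/-- The strong product of two simple graphs. -/
def strongProd {α β : Type} (G : SimpleGraph α) (H : SimpleGraph β) :
    SimpleGraph (α × β) where
  Adj x y := (x.1 = y.1 ∧ H.Adj x.2 y.2) ∨ (x.2 = y.2 ∧ G.Adj x.1 y.1) ∨
    (G.Adj x.1 y.1 ∧ H.Adj x.2 y.2)
  symm := by
    constructor
    rintro ⟨a, b⟩ ⟨c, d⟩ (⟨h1, h2⟩ | ⟨h1, h2⟩ | ⟨h1, h2⟩)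
    · exact Or.inl ⟨h1.symm, h2.symm⟩
    · exact Or.inr (Or.inl ⟨h1.symm, h2.symm⟩)
    · exact Or.inr (Or.inr ⟨h1.symm, h2.symm⟩)
  loopless := by
    constructor
    rintro ⟨a, b⟩ (⟨_, h⟩ | ⟨_, h⟩ | ⟨h, _⟩)
    · exact H.loopless.irrefl b h
    · exact G.loopless.irrefl a h
    · exact G.loopless.irrefl a h

/-- The join `G ∨ H` of two graphs with disjoint vertex sets. -/
def joinGraph {α β : Type} (G : SimpleGraph α) (H : SimpleGraph β) :
    SimpleGraph (α ⊕ β) where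
  Adj x y := match x, y with
    | Sum.inl a, Sum.inl b => G.Adj a b
    | Sum.inr a, Sum.inr b => H.Adj a b
    | Sum.inl _, Sum.inr _ => True
    | Sum.inr _, Sum.inl _ => True
  symm := by
    constructor
    rintro (a | a) (b | b) h
    · exact h.symm
    · trivial
    · trivial
    · exact h.symm
  loopless := by
    constructor
    rintro (a | a) h
    · exact G.loopless.irrefl a h
    · exact H.loopless.irrefl a h

/-- The vertex-sum `G · H` of `G` and `H`, obtained by identifying the vertex `a` of `G`
with the vertex `b` of `H` (and no other vertices or edges shared). -/
def vertexSum {α β : Type} (G : SimpleGraph α) (H : SimpleGraph β) (a : α) (b : β) :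
    SimpleGraph (α ⊕ {y : β // y ≠ b}) where
  Adj x y := match x, y with
    | Sum.inl u, Sum.inl u' => G.Adj u u'
    | Sum.inr v, Sum.inr v' => H.Adj v.1 v'.1
    | Sum.inl u, Sum.inr v => u = a ∧ H.Adj b v.1
    | Sum.inr v, Sum.inl u => u = a ∧ H.Adj b v.1
  symm := by
    constructor
    rintro (u | v) (u' | v') h
    · exact h.symm
    · exact h
    · exact h
    · exact h.symm
  loopless := by
    constructor
    rintro (u | v) h
    · exact G.loopless.irrefl u h
    · exact H.loopless.irrefl v.1 h

/-- The corona product `G ∘ H`: one copy of `G`, one copy of `H` for each vertex of `G`,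
with every vertex of the `i`-th copy of `H` joined to the `i`-th vertex of `G`. -/
def corona {α β : Type} (G : SimpleGraph α) (H : SimpleGraph β) :
    SimpleGraph (α ⊕ α × β) where
  Adj x y := match x, y with
    | Sum.inl u, Sum.inl u' => G.Adj u u'
    | Sum.inr p, Sum.inr q => p.1 = q.1 ∧ H.Adj p.2 q.2
    | Sum.inl u, Sum.inr p => u = p.1
    | Sum.inr p, Sum.inl u => u = p.1
  symm := by
    constructor
    rintro (u | p) (u' | q) h
    · exact h.symm
    · exact h
    · exact h
    · exact ⟨h.1.symm, h.2.symm⟩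
  loopless := by
    constructor
    rintro (u | p) h
    · exact G.loopless.irrefl u h
    · exact H.loopless.irrefl p.2 h.2

/-- `v : Fin m → V` is an OS-vertex set of `G`: the vertices are distinct, and for each `k`
there is `w` adjacent to `v k`, different from all `v l` with `l ≤ k`, and non-adjacent to
every `v l` (`l < k`) lying in the connected component of `v k` in the subgraph induced by
`{v 0, …, v k}`. -/
def IsOSSet {V : Type} (G : SimpleGraph V) {m : ℕ} (v : Fin m → V) : Prop :=
  Function.Injective v ∧
  ∀ k : Fin m, ∃ w : V,
    G.Adj (v k) w ∧
    (∀ l : Fin m, l ≤ k → w ≠ v l) ∧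
    ∀ l : Fin m, (hl : l < k) →
      (G.induce {x : V | ∃ l' : Fin m, l' ≤ k ∧ x = v l'}).Reachable
        ⟨v l, ⟨l, le_of_lt hl, rfl⟩⟩ ⟨v k, ⟨k, le_refl k, rfl⟩⟩ →
      ¬ G.Adj w (v l)

/-- The OS-number of `G`: the maximum cardinality of an OS-vertex set of `G`. -/
noncomputable def OSNumber {V : Type} (G : SimpleGraph V) : ℕ :=
  sSup {m : ℕ | ∃ v : Fin m → V, IsOSSet G v}


/-! ### Auxiliary development -/

section GraphHelpers

variable {V : Type}

lemma tree_adj_of_card_two [Fintype V] [DecidableEq V] (T : SimpleGraph V) (hT : T.IsTree)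
    (hcard : Fintype.card V = 2) : ∀ i j : V, i ≠ j → T.Adj i j := by
  intro i j hij
  obtain ⟨q⟩ := hT.isConnected.preconnected i j
  cases q with
  | nil => exact absurd rfl hij
  | cons h r =>
    rename_i x
    by_cases hx : x = j
    · exact hx ▸ h
    · exfalso
      have hxi : x ≠ i := h.ne'
      have h3 : ({i, j, x} : Finset V).card = 3 := by
        rw [Finset.card_insert_of_notMem (by simp [hij, Ne.symm hxi]),
          Finset.card_insert_of_notMem (by simp [Ne.symm hx]), Finset.card_singleton]
      have hle : ({i, j, x} : Finset V).card ≤ 2 := hcard ▸ Finset.card_le_univ _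
      omega

lemma tree_exists_leaf [Fintype V] [DecidableEq V] {T : SimpleGraph V}
    (hT : T.IsTree) (hV : 2 ≤ Fintype.card V) :
    ∃ ℓ p : V, T.Adj ℓ p ∧ ∀ q, T.Adj ℓ q → q = p := by
  classical
  have hdeg : ∀ v : V, 0 < T.degree v := by
    intro v
    rw [T.degree_pos_iff_exists_adj]
    obtain ⟨w, hw⟩ := Fintype.exists_ne_of_one_lt_card hV v
    obtain ⟨q⟩ := hT.isConnected.preconnected v w
    cases q with
    | nil => exact absurd rfl hw
    | cons h r => exact ⟨_, h⟩
  have hone : ∃ v, T.degree v = 1 := by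
    by_contra hc
    push_neg at hc
    have h2 : ∀ v : V, 2 ≤ T.degree v := by
      intro v; have h1 := hdeg v; have h2 := hc v; omega
    have hsum : 2 * Fintype.card V ≤ ∑ v : V, T.degree v := by
      calc 2 * Fintype.card V = ∑ _v : V, 2 := by
            simp [Finset.sum_const, mul_comm]
        _ ≤ ∑ v : V, T.degree v := Finset.sum_le_sum fun v _ => h2 v
    rw [SimpleGraph.sum_degrees_eq_twice_card_edges] at hsum
    have hedge := hT.card_edgeFinset
    omega
  obtain ⟨ℓ, hℓ⟩ := hone
  obtain ⟨p, hp⟩ := Finset.card_eq_one.mp hℓ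
  refine ⟨ℓ, p, ?_, ?_⟩
  · have : p ∈ T.neighborFinset ℓ := by rw [hp]; exact Finset.mem_singleton_self p
    exact (SimpleGraph.mem_neighborFinset _ _ _).mp this
  · intro q hq
    have : q ∈ T.neighborFinset ℓ := (SimpleGraph.mem_neighborFinset _ _ _).mpr hq
    rw [hp] at this
    exact Finset.mem_singleton.mp this

lemma reach_avoid {T : SimpleGraph V} {ℓ p : V}
    (huniq : ∀ q, T.Adj ℓ q → q = p) :
    ∀ (k : ℕ) (a b : V) (ha : a ≠ ℓ) (hb : b ≠ ℓ) (q : T.Walk a b), q.length ≤ k →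
      (T.induce {x : V | x ≠ ℓ}).Reachable ⟨a, ha⟩ ⟨b, hb⟩ := by
  intro k
  induction k with
  | zero =>
    intro a b ha hb q hq
    have : a = b := (SimpleGraph.Walk.eq_of_length_eq_zero (Nat.le_zero.mp hq))
    subst this
    rfl
  | succ k ih =>
    intro a b ha hb q hq
    cases q with
    | nil => rfl
    | cons h r =>
      rename_i x
      by_cases hx : x = ℓ
      · subst hx
        have hap : a = p := huniq a h.symm
        cases r with
        | nil => exact absurd rfl hb
        | cons h' r' =>
          rename_i x'
          have hx'p : x' = p := huniq x' h'
          subst hap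
          subst hx'p
          refine ih _ b ha hb r' ?_
          simp only [SimpleGraph.Walk.length_cons] at hq
          omega
      · have h1 : (T.induce {x : V | x ≠ ℓ}).Adj ⟨a, ha⟩ ⟨x, hx⟩ := by
          simpa using h
        have h2 := ih x b hx hb r (by simpa [SimpleGraph.Walk.length_cons] using hq)
        exact (h1.reachable).trans h2

lemma isTree_induce_compl_leaf {T : SimpleGraph V}
    (hT : T.IsTree) {ℓ p : V} (hadj : T.Adj ℓ p) (huniq : ∀ q, T.Adj ℓ q → q = p) :
    (T.induce {x : V | x ≠ ℓ}).IsTree := by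
  constructor
  · haveI : Nonempty {x : V | x ≠ ℓ} := ⟨⟨p, hadj.ne'⟩⟩
    apply SimpleGraph.Connected.mk
    rintro ⟨a, ha⟩ ⟨b, hb⟩
    obtain ⟨q⟩ := hT.isConnected.preconnected a b
    exact reach_avoid huniq q.length a b ha hb q le_rfl
  · intro v c hc
    exact hT.IsAcyclic (c.map (SimpleGraph.Embedding.induce {x : V | x ≠ ℓ}).toHom)
      (hc.map Subtype.val_injective)

end GraphHelpers


section TreeLinAlg

open Submodule Module Set Matrix

variable {𝕜 : Type} [RCLike 𝕜] {E : Type} [NormedAddCommGroup E] [InnerProductSpace 𝕜 E]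
  [FiniteDimensional 𝕜 E]

lemma treeLB : ∀ (k : ℕ) {V : Type} [Fintype V] [DecidableEq V] (_ : Fintype.card V = k)
    (T : SimpleGraph V) (_ : T.IsTree) (y : V → E)
    (_ : ∀ i j, i ≠ j → ((inner 𝕜 (y i) (y j) : 𝕜) ≠ 0 ↔ T.Adj i j)),
    k - 1 ≤ finrank 𝕜 (span 𝕜 (Set.range y)) := by
  intro k
  induction k using Nat.strong_induction_on with
  | _ k ih =>
    intro V _ _ hcard T hT y hy
    rcases Nat.lt_or_ge k 2 with hk | hk
    · have h0 : k - 1 = 0 := by omega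
      simp [h0]
    · obtain ⟨ℓ, p, hadj, huniq⟩ := tree_exists_leaf hT (by omega)
      have hℓp : ℓ ≠ p := hadj.ne
      have hip : (inner 𝕜 (y ℓ) (y p) : 𝕜) ≠ 0 := (hy ℓ p hℓp).mpr hadj
      have hyℓ : y ℓ ≠ 0 := by
        intro h0; apply hip; rw [h0, inner_zero_left]
      have hNz : (inner 𝕜 (y ℓ) (y ℓ) : 𝕜) ≠ 0 := inner_self_ne_zero.mpr hyℓ
      set c : V → 𝕜 := fun t => (inner 𝕜 (y ℓ) (y t) : 𝕜) / (inner 𝕜 (y ℓ) (y ℓ) : 𝕜) with hc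
      set g : {x : V | x ≠ ℓ} → E := fun t => y t.1 - c t.1 • y ℓ with hg
      have hperp : ∀ t : V, (inner 𝕜 (y ℓ) (y t - c t • y ℓ) : 𝕜) = 0 := by
        intro t
        rw [inner_sub_right, inner_smul_right, hc]
        field_simp
        ring
      have hzero : ∀ s : V, s ≠ ℓ → s ≠ p → (inner 𝕜 (y ℓ) (y s) : 𝕜) = 0 := by
        intro s hs hsp
        by_contra hne
        exact hsp (huniq s ((hy ℓ s (Ne.symm hs)).mp hne))
      have hgg : ∀ s t : V, s ≠ ℓ → t ≠ ℓ → s ≠ t →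
          (inner 𝕜 (y s - c s • y ℓ) (y t - c t • y ℓ) : 𝕜) = inner 𝕜 (y s) (y t) := by
        intro s t hs ht hst
        simp only [inner_sub_left, inner_sub_right, inner_smul_left, inner_smul_right]
        rcases em (s = p) with hsp | hsp
        · have htp : t ≠ p := fun h => hst (hsp.trans h.symm)
          have h1 : (inner 𝕜 (y ℓ) (y t) : 𝕜) = 0 := hzero t ht htp
          have h3 : c t = 0 := by rw [hc]; simp [h1]
          rw [h1, h3]
          ring
        · have h1 : (inner 𝕜 (y ℓ) (y s) : 𝕜) = 0 := hzero s hs hsp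
          have h2 : (inner 𝕜 (y s) (y ℓ) : 𝕜) = 0 := by
            rw [← inner_conj_symm, h1, map_zero]
          have h3 : c s = 0 := by rw [hc]; simp [h1]
          rw [h2, h3]
          simp
      have hT' := isTree_induce_compl_leaf hT hadj huniq
      have hy' : ∀ i j : {x : V | x ≠ ℓ}, i ≠ j →
          ((inner 𝕜 (g i) (g j) : 𝕜) ≠ 0 ↔ (T.induce {x : V | x ≠ ℓ}).Adj i j) := by
        intro i j hij
        have hij' : i.1 ≠ j.1 := fun h => hij (Subtype.ext h)
        rw [hg]
        simp only []
        rw [hgg i.1 j.1 i.2 j.2 hij']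
        simp only [SimpleGraph.comap_adj, Function.Embedding.coe_subtype]
        exact hy i.1 j.1 hij'
      have hcard' : Fintype.card {x : V | x ≠ ℓ} = k - 1 := by
        have e : Fintype.card {x : V | x ≠ ℓ} = Fintype.card {x : V // ¬ (x = ℓ)} :=
          Fintype.card_congr (Equiv.subtypeEquivRight (fun _ => Iff.rfl))
        rw [e, Fintype.card_subtype_compl, Fintype.card_subtype_eq, hcard]
      have hIH := ih (k - 1) (by omega) hcard' _ hT' g hy'
      set X := span 𝕜 (Set.range y) with hX
      set Gsp := span 𝕜 (Set.range g) with hG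
      have hgmem : ∀ t : {x : V | x ≠ ℓ}, g t ∈ X := fun t =>
        sub_mem (subset_span (mem_range_self _)) (smul_mem _ _ (subset_span (mem_range_self _)))
      have hGle : Gsp ≤ X := span_le.mpr (range_subset_iff.mpr hgmem)
      have hyX : y ℓ ∈ X := subset_span (mem_range_self _)
      have hGperp : Gsp ≤ (𝕜 ∙ y ℓ)ᗮ := by
        apply span_le.mpr
        rintro _ ⟨t, rfl⟩
        rw [SetLike.mem_coe, Submodule.mem_orthogonal_singleton_iff_inner_left,
          ← inner_conj_symm]
        rw [hg]
        simp only []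
        rw [hperp t.1, map_zero]
      have hdisj : Disjoint Gsp (𝕜 ∙ y ℓ) :=
        ((Submodule.orthogonal_disjoint (𝕜 ∙ y ℓ)).symm).mono_left hGperp
      have hsum := Submodule.finrank_sup_add_finrank_inf_eq Gsp (𝕜 ∙ y ℓ)
      rw [disjoint_iff.mp hdisj, finrank_bot, finrank_span_singleton hyℓ] at hsum
      have hle2 : Gsp ⊔ (𝕜 ∙ y ℓ) ≤ X :=
        sup_le hGle ((Submodule.span_singleton_le_iff_mem _ _).mpr hyX)
      have hmono := Submodule.finrank_mono hle2
      omega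


end TreeLinAlg

section TreeRepSec
open Submodule Module Set
variable {𝕜 : Type} [RCLike 𝕜]

/-- Append a coordinate to a Euclidean vector. -/
noncomputable def esSnoc {d : ℕ} (x : EuclideanSpace 𝕜 (Fin d)) (a : 𝕜) :
    EuclideanSpace 𝕜 (Fin (d + 1)) := WithLp.toLp 2 (Fin.snoc (α := fun _ => 𝕜) (WithLp.ofLp x) a)

@[simp] lemma esSnoc_castSucc {d : ℕ} (x : EuclideanSpace 𝕜 (Fin d)) (a : 𝕜) (j : Fin d) :
    esSnoc x a (Fin.castSucc j) = x j := by simp [esSnoc]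

@[simp] lemma esSnoc_last {d : ℕ} (x : EuclideanSpace 𝕜 (Fin d)) (a : 𝕜) :
    esSnoc x a (Fin.last d) = a := by simp [esSnoc]

/-- Append a zero coordinate, as a linear map. -/
noncomputable def snocL (d : ℕ) :
    EuclideanSpace 𝕜 (Fin d) →ₗ[𝕜] EuclideanSpace 𝕜 (Fin (d + 1)) where
  toFun x := esSnoc x 0
  map_add' x y := by
    ext i
    refine Fin.lastCases ?_ (fun j => ?_) i <;>
      simp [PiLp.add_apply]
  map_smul' a x := by
    ext i
    refine Fin.lastCases ?_ (fun j => ?_) i <;>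
      simp [PiLp.smul_apply]

@[simp] lemma snocL_apply {d : ℕ} (x : EuclideanSpace 𝕜 (Fin d)) (i : Fin (d+1)) :
    snocL d x i = esSnoc x 0 i := rfl

lemma inner_esSnoc {d : ℕ} (x y : EuclideanSpace 𝕜 (Fin d)) (a b : 𝕜) :
    (inner 𝕜 (esSnoc x a) (esSnoc y b) : 𝕜) = (inner 𝕜 x y : 𝕜) + starRingEnd 𝕜 a * b := by
  simp only [PiLp.inner_apply, RCLike.inner_apply']
  rw [Fin.sum_univ_castSucc]
  simp

lemma esSnoc_eq_add {d : ℕ} (x : EuclideanSpace 𝕜 (Fin d)) (a : 𝕜) :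
    esSnoc x a = snocL d x + a • esSnoc (0 : EuclideanSpace 𝕜 (Fin d)) 1 := by
  ext i
  refine Fin.lastCases ?_ (fun j => ?_) i <;>
    simp [PiLp.add_apply, PiLp.smul_apply]

lemma treeRep : ∀ (k : ℕ) {V : Type} [Fintype V] [DecidableEq V]
    (_ : Fintype.card V = k + 2) (T : SimpleGraph V) (_ : T.IsTree),
    ∃ (y : V → EuclideanSpace 𝕜 (Fin (k + 1))) (u : EuclideanSpace 𝕜 (Fin (k + 1))),
      Submodule.span 𝕜 (Set.range y) = ⊤ ∧
      (∀ i j, i ≠ j → ((inner 𝕜 (y i) (y j) : 𝕜) ≠ 0 ↔ T.Adj i j)) ∧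
      (∀ t, (inner 𝕜 u (y t) : 𝕜) ≠ 0) := by
  intro k
  induction k with
  | zero =>
    intro V _ _ hcard T hT
    refine ⟨fun _ => WithLp.toLp 2 (fun _ => 1), WithLp.toLp 2 (fun _ => 1), ?_, ?_, ?_⟩
    · rw [eq_top_iff]
      rintro x -
      have hne : Nonempty V := Fintype.card_pos_iff.mp (by omega)
      obtain ⟨v⟩ := hne
      have hmem : (WithLp.toLp 2 (fun _ => (1:𝕜)) : EuclideanSpace 𝕜 (Fin 1)) ∈
          span 𝕜 (Set.range fun _ : V => (WithLp.toLp 2 (fun _ => (1:𝕜)) : EuclideanSpace 𝕜 (Fin 1))) :=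
        subset_span ⟨v, rfl⟩
      have hx : x = x 0 • (WithLp.toLp 2 (fun _ => (1:𝕜)) : EuclideanSpace 𝕜 (Fin 1)) := by
        ext i
        have hi : i = 0 := Fin.ext (by omega)
        subst hi
        simp [PiLp.smul_apply]
      rw [hx]
      exact smul_mem _ _ hmem
    · intro i j hij
      have hadj : T.Adj i j := tree_adj_of_card_two T hT hcard i j hij
      simp only [PiLp.inner_apply, RCLike.inner_apply]
      simpa using hadj
    · intro t
      simp [PiLp.inner_apply, RCLike.inner_apply]
      intro h; exact one_ne_zero (congrFun h 0)
  | succ k ih =>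
    intro V _ _ hcard T hT
    obtain ⟨ℓ, p, hadj, huniq⟩ := tree_exists_leaf hT (by omega)
    have hpℓ : p ≠ ℓ := hadj.ne'
    have hcard' : Fintype.card {x : V | x ≠ ℓ} = k + 2 := by
      have e : Fintype.card {x : V | x ≠ ℓ} = Fintype.card {x : V // ¬ (x = ℓ)} :=
        Fintype.card_congr (Equiv.subtypeEquivRight (fun _ => Iff.rfl))
      rw [e, Fintype.card_subtype_compl, Fintype.card_subtype_eq, hcard]
      omega
    obtain ⟨y', u', hspan', hpat', hu'⟩ := ih hcard' _ (isTree_induce_compl_leaf hT hadj huniq)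
    classical
    set a : 𝕜 := inner 𝕜 u' (y' ⟨p, hpℓ⟩) with ha
    have haz : a ≠ 0 := hu' _
    set e1 : EuclideanSpace 𝕜 (Fin (k + 2)) := esSnoc (0 : EuclideanSpace 𝕜 (Fin (k+1))) 1 with he1
    set y : V → EuclideanSpace 𝕜 (Fin (k + 2)) := fun t =>
      if h : t = ℓ then e1
      else esSnoc (y' ⟨t, h⟩) (if t = p then 1 else 0) with hy
    set u : EuclideanSpace 𝕜 (Fin (k + 2)) := esSnoc u' (starRingEnd 𝕜 a) with hu
    have hadjℓ : ∀ j : V, j ≠ ℓ → (T.Adj ℓ j ↔ j = p) :=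
      fun j hj => ⟨fun h => huniq j h, fun h => h ▸ hadj⟩
    refine ⟨y, u, ?_, ?_, ?_⟩
    · -- spanning
      rw [eq_top_iff]
      rintro z -
      set S := span 𝕜 (Set.range y) with hS
      have hyℓ : y ℓ = e1 := by simp [hy]
      have he1S : e1 ∈ S := hyℓ ▸ subset_span ⟨ℓ, rfl⟩
      have hblock : ∀ t : {x : V | x ≠ ℓ}, (snocL (k+1)) (y' t) ∈ S := by
        intro t
        have hyt : y t.1 = snocL (k+1) (y' ⟨t.1, t.2⟩) + (if t.1 = p then (1:𝕜) else 0) • e1 := by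
          simp only [hy, dif_neg t.2, he1]
          exact esSnoc_eq_add _ _
        have hmem : y t.1 ∈ S := subset_span ⟨t.1, rfl⟩
        have hsub := Submodule.sub_mem S hmem (Submodule.smul_mem S
          (if t.1 = p then (1:𝕜) else 0) he1S)
        rw [hyt, add_sub_cancel_right] at hsub
        simpa using hsub
      have hall : ∀ x : EuclideanSpace 𝕜 (Fin (k+1)), (snocL (k+1)) x ∈ S := by
        intro x
        have hx : x ∈ span 𝕜 (Set.range y') := hspan' ▸ mem_top
        have hmap : Submodule.map (snocL (k+1)) (span 𝕜 (Set.range y')) ≤ S := by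
          rw [Submodule.map_span]
          apply span_le.mpr
          rintro _ ⟨_, ⟨t, rfl⟩, rfl⟩
          exact hblock t
        exact hmap ⟨x, hx, rfl⟩
      have hz : z = (snocL (k+1)) (WithLp.toLp 2 (fun j => z (Fin.castSucc j))) + z (Fin.last (k+1)) • e1 := by
        ext i
        refine Fin.lastCases ?_ (fun j => ?_) i <;>
          simp [PiLp.add_apply, PiLp.smul_apply, he1]
      rw [hz]
      exact Submodule.add_mem S (hall _) (Submodule.smul_mem S _ he1S)
    · -- pattern
      intro i j hij
      by_cases hi : i = ℓ
      · have hj : j ≠ ℓ := fun h => hij (hi.trans h.symm)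
        simp only [hy, dif_pos hi, dif_neg hj, he1]
        rw [inner_esSnoc, inner_zero_left, map_one, one_mul, zero_add, hi, hadjℓ j hj]
        by_cases hjp : j = p <;> simp [hjp]
      · by_cases hj : j = ℓ
        · simp only [hy, dif_pos hj, dif_neg hi, he1]
          rw [inner_esSnoc, inner_zero_right, zero_add, mul_one, hj]
          have hAi : T.Adj i ℓ ↔ i = p := by rw [SimpleGraph.adj_comm]; exact hadjℓ i hi
          rw [hAi]
          by_cases hip : i = p <;> simp [hip]
        · simp only [hy, dif_neg hi, dif_neg hj]
          rw [inner_esSnoc]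
          have hnotboth : (starRingEnd 𝕜) (if i = p then (1:𝕜) else 0) *
              (if j = p then (1:𝕜) else 0) = 0 := by
            rcases em (i = p) with hip | hip
            · have hjp : j ≠ p := fun h => hij (hip.trans h.symm)
              simp [hjp]
            · simp [hip]
          rw [hnotboth, add_zero]
          have hne' : (⟨i, hi⟩ : {x : V | x ≠ ℓ}) ≠ ⟨j, hj⟩ :=
            fun h => hij (congrArg Subtype.val h)
          rw [hpat' ⟨i, hi⟩ ⟨j, hj⟩ hne']
          simp only [SimpleGraph.comap_adj, Function.Embedding.coe_subtype]
    · -- inner 𝕜 with u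
      intro t
      by_cases ht : t = ℓ
      · simp only [hy, hu, dif_pos ht, he1]
        rw [inner_esSnoc, inner_zero_right, zero_add, mul_one, RCLike.conj_conj]
        exact haz
      · simp only [hy, hu, dif_neg ht]
        rw [inner_esSnoc]
        rcases em (t = p) with htp | htp
        · have hts : (⟨t, ht⟩ : {x : V | x ≠ ℓ}) = ⟨p, hpℓ⟩ := Subtype.ext htp
          rw [hts, ← ha, RCLike.conj_conj, if_pos htp, mul_one, ← two_mul]
          exact mul_ne_zero two_ne_zero haz
        · rw [if_neg htp, mul_zero, add_zero]
          exact hu' _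

end TreeRepSec

section CoronaAdj
open Submodule Module Set

lemma corona_adj_inl_inl {α β : Type} (G : SimpleGraph α) (H : SimpleGraph β) (u u' : α) :
    (corona G H).Adj (Sum.inl u) (Sum.inl u') ↔ G.Adj u u' := Iff.rfl

lemma corona_adj_inr_inr {α β : Type} (G : SimpleGraph α) (H : SimpleGraph β) (p q : α × β) :
    (corona G H).Adj (Sum.inr p) (Sum.inr q) ↔ p.1 = q.1 ∧ H.Adj p.2 q.2 := Iff.rfl

lemma corona_adj_inl_inr {α β : Type} (G : SimpleGraph α) (H : SimpleGraph β) (u : α) (p : α × β) :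
    (corona G H).Adj (Sum.inl u) (Sum.inr p) ↔ u = p.1 := Iff.rfl

lemma corona_adj_inr_inl {α β : Type} (G : SimpleGraph α) (H : SimpleGraph β) (u : α) (p : α × β) :
    (corona G H).Adj (Sum.inr p) (Sum.inl u) ↔ u = p.1 := Iff.rfl


end CoronaAdj

section EmbedSec
open Submodule Module Set
variable {𝕜 : Type} [RCLike 𝕜]

section Embed

variable {n d : ℕ}

/-- The extra "shared" coordinate vector. -/
noncomputable def eU (𝕜 : Type) [RCLike 𝕜] (n d : ℕ) :
    EuclideanSpace 𝕜 ((Fin n × Fin d) ⊕ Unit) :=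
  WithLp.toLp 2 (fun q => Sum.elim (fun _ => (0:𝕜)) (fun _ => (1:𝕜)) q)

/-- Embedding of the `i`-th block. -/
noncomputable def embedBlock (n : ℕ) (i : Fin n) :
    EuclideanSpace 𝕜 (Fin d) →ₗ[𝕜] EuclideanSpace 𝕜 ((Fin n × Fin d) ⊕ Unit) where
  toFun x := WithLp.toLp 2 (fun q => Sum.elim (fun js : Fin n × Fin d => if js.1 = i then x js.2 else 0)
    (fun _ => 0) q)
  map_add' x y := by
    ext q
    rcases q with ⟨j, s⟩ | u
    · show (if j = i then (x + y) s else 0)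
        = (if j = i then x s else 0) + (if j = i then y s else 0)
      rw [PiLp.add_apply]
      split_ifs <;> simp
    · show (0:𝕜) = 0 + 0
      simp
  map_smul' a x := by
    ext q
    rcases q with ⟨j, s⟩ | u
    · show (if j = i then (a • x) s else 0) = a * (if j = i then x s else 0)
      rw [PiLp.smul_apply, smul_eq_mul]
      split_ifs <;> simp
    · show (0:𝕜) = a * 0
      simp

@[simp] lemma embedBlock_apply_inl (i : Fin n) (x : EuclideanSpace 𝕜 (Fin d))
    (p : Fin n × Fin d) :
    embedBlock n i x (Sum.inl p) = if p.1 = i then x p.2 else 0 := rfl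

@[simp] lemma embedBlock_apply_inr (i : Fin n) (x : EuclideanSpace 𝕜 (Fin d)) (u : Unit) :
    embedBlock n i x (Sum.inr u) = 0 := rfl

@[simp] lemma eU_apply_inl (p : Fin n × Fin d) : eU 𝕜 n d (Sum.inl p) = (0:𝕜) := rfl

@[simp] lemma eU_apply_inr (u : Unit) : eU 𝕜 n d (Sum.inr u) = (1:𝕜) := rfl

lemma inner_embed_embed (i j : Fin n) (x x' : EuclideanSpace 𝕜 (Fin d)) :
    (inner 𝕜 (embedBlock n i x) (embedBlock n j x') : 𝕜)
      = if i = j then (inner 𝕜 x x' : 𝕜) else 0 := by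
  simp only [PiLp.inner_apply, RCLike.inner_apply']
  rw [Fintype.sum_sum_type, Fintype.sum_prod_type]
  simp only [embedBlock_apply_inl, embedBlock_apply_inr, map_zero, mul_zero,
    Finset.sum_const_zero, add_zero]
  have hterm : ∀ j' : Fin n,
      (∑ s : Fin d, (starRingEnd 𝕜) (if (j', s).1 = i then x (j', s).2 else 0)
        * (if (j', s).1 = j then x' (j', s).2 else 0))
      = if j' = i ∧ j' = j then ∑ s : Fin d, (starRingEnd 𝕜) (x s) * x' s else 0 := by
    intro j'
    by_cases h1 : j' = i
    · by_cases h2 : j' = j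
      · simp [h1, h2]
      · simp [h1, h2]
    · simp [h1]
  simp only [hterm]
  by_cases h : i = j
  · subst h
    simp only [and_self]
    rw [Finset.sum_ite_eq' Finset.univ i (fun _ => ∑ s : Fin d, (starRingEnd 𝕜) (x s) * x' s)]
    simp
  · rw [if_neg h]
    apply Finset.sum_eq_zero
    intro j' _
    rw [if_neg]
    rintro ⟨rfl, rfl⟩
    exact h rfl

lemma inner_embed_eU (i : Fin n) (x : EuclideanSpace 𝕜 (Fin d)) :
    (inner 𝕜 (embedBlock n i x) (eU 𝕜 n d) : 𝕜) = 0 := by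
  simp only [PiLp.inner_apply, RCLike.inner_apply]
  rw [Fintype.sum_sum_type]
  simp

lemma inner_eU_embed (i : Fin n) (x : EuclideanSpace 𝕜 (Fin d)) :
    (inner 𝕜 (eU 𝕜 n d) (embedBlock n i x) : 𝕜) = 0 := by
  simp only [PiLp.inner_apply, RCLike.inner_apply]
  rw [Fintype.sum_sum_type]
  simp

lemma inner_eU_eU : (inner 𝕜 (eU 𝕜 n d) (eU 𝕜 n d) : 𝕜) = 1 := by
  simp only [PiLp.inner_apply, RCLike.inner_apply]
  rw [Fintype.sum_sum_type]
  simp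

lemma inner_z_embed (z : EuclideanSpace 𝕜 ((Fin n × Fin d) ⊕ Unit)) (i : Fin n)
    (x : EuclideanSpace 𝕜 (Fin d)) :
    (inner 𝕜 z (embedBlock n i x) : 𝕜)
      = ∑ s : Fin d, (starRingEnd 𝕜) (z (Sum.inl (i, s))) * x s := by
  simp only [PiLp.inner_apply, RCLike.inner_apply']
  rw [Fintype.sum_sum_type, Fintype.sum_prod_type]
  simp only [embedBlock_apply_inl, embedBlock_apply_inr, mul_zero,
    Finset.sum_const_zero, add_zero]
  have hterm : ∀ j' : Fin n,
      (∑ s : Fin d, (starRingEnd 𝕜) (z (Sum.inl (j', s)))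
        * (if (j', s).1 = i then x (j', s).2 else 0))
      = if j' = i then ∑ s : Fin d, (starRingEnd 𝕜) (z (Sum.inl (i, s))) * x s else 0 := by
    intro j'
    by_cases h1 : j' = i
    · subst h1; simp
    · simp [h1]
  simp only [hterm]
  rw [Finset.sum_ite_eq' Finset.univ i
    (fun _ => ∑ s : Fin d, (starRingEnd 𝕜) (z (Sum.inl (i, s))) * x s)]
  simp

lemma inner_z_eU (z : EuclideanSpace 𝕜 ((Fin n × Fin d) ⊕ Unit)) :
    (inner 𝕜 z (eU 𝕜 n d) : 𝕜) = (starRingEnd 𝕜) (z (Sum.inr ())) := by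
  simp only [PiLp.inner_apply, RCLike.inner_apply]
  rw [Fintype.sum_sum_type]
  simp

end Embed

end EmbedSec

section CoronaSec
open Submodule Module Set
variable {𝕜 : Type} [RCLike 𝕜] {E : Type} [NormedAddCommGroup E] [InnerProductSpace 𝕜 E]
  [FiniteDimensional 𝕜 E]

lemma coronaLB (n m : ℕ) (hm : 2 ≤ m) (hn : 2 ≤ n)
    (T : SimpleGraph (Fin m)) (hT : T.IsTree)
    (F : (Fin n ⊕ Fin n × Fin m) → E)
    (hpat : ∀ i j, i ≠ j →
      ((inner 𝕜 (F i) (F j) : 𝕜) ≠ 0 ↔ (corona (⊤ : SimpleGraph (Fin n)) T).Adj i j)) :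
    n * (m - 1) + 1 ≤ finrank 𝕜 (span 𝕜 (Set.range F)) := by
  classical
  set S : Fin n → Submodule 𝕜 E :=
    fun i => span 𝕜 (Set.range (fun t : Fin m => F (Sum.inr (i, t)))) with hSdef
  have hS : ∀ i, m - 1 ≤ finrank 𝕜 (S i) := by
    intro i
    refine treeLB m (Fintype.card_fin m) T hT _ ?_
    intro s t hst
    have hne : (Sum.inr (i, s) : Fin n ⊕ Fin n × Fin m) ≠ Sum.inr (i, t) := by
      simp [hst]
    rw [hpat _ _ hne, corona_adj_inr_inr]
    constructor
    · rintro ⟨-, h⟩; exact h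
    · intro h; exact ⟨rfl, h⟩
  have horth : ∀ i j : Fin n, i ≠ j → S i ⟂ S j := by
    intro i j hij
    rw [hSdef]
    rw [Submodule.isOrtho_span]
    rintro _ ⟨s, rfl⟩ _ ⟨t, rfl⟩
    have hne : (Sum.inr (i, s) : Fin n ⊕ Fin n × Fin m) ≠ Sum.inr (j, t) := by
      simp only [ne_eq, Sum.inr.injEq, Prod.mk.injEq, not_and]
      intro h
      exact absurd h hij
    by_contra hnz
    have hadj := (hpat _ _ hne).mp hnz
    rw [corona_adj_inr_inr] at hadj
    exact hij hadj.1
  have hapex : ∀ i j : Fin n, i ≠ j → (𝕜 ∙ F (Sum.inl i)) ⟂ S j := by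
    intro i j hij
    rw [hSdef, Submodule.isOrtho_span]
    rintro u hu _ ⟨t, rfl⟩
    rw [Set.mem_singleton_iff] at hu
    subst hu
    by_contra hnz
    have hne : (Sum.inl i : Fin n ⊕ Fin n × Fin m) ≠ Sum.inr (j, t) := Sum.inl_ne_inr
    have hadj := (hpat _ _ hne).mp hnz
    rw [corona_adj_inl_inr] at hadj
    exact hij hadj
  have hkey : ∀ (x : E) (s : Finset (Fin n)), (∀ j ∈ s, (𝕜 ∙ x) ⟂ S j) → x ∈ (s.sup S)ᗮ := by
    intro x s hx
    have hiso : (𝕜 ∙ x) ⟂ s.sup S := by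
      rw [Finset.sup_eq_iSup, Submodule.isOrtho_iSup_right]
      intro j
      rw [Submodule.isOrtho_iSup_right]
      intro hj
      exact hx j hj
    exact hiso (Submodule.mem_span_singleton_self x)
  have hsup : ∀ s : Finset (Fin n), s.card * (m - 1) ≤ finrank 𝕜 ↥(s.sup S) := by
    intro s
    induction s using Finset.induction_on with
    | empty => simp
    | @insert x s hxs ih =>
      rw [Finset.sup_insert]
      have hortho : S x ⟂ s.sup S := by
        rw [Finset.sup_eq_iSup, Submodule.isOrtho_iSup_right]
        intro j
        rw [Submodule.isOrtho_iSup_right]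
        intro hj
        exact horth x j (fun h => hxs (h ▸ hj))
      have hadd := Submodule.finrank_sup_add_finrank_inf_eq (S x) (s.sup S)
      rw [disjoint_iff.mp hortho.disjoint, finrank_bot, add_zero] at hadd
      rw [Finset.card_insert_of_notMem hxs]
      have hx := hS x
      calc (s.card + 1) * (m - 1) = s.card * (m - 1) + (m - 1) := by ring
        _ ≤ finrank 𝕜 ↥(s.sup S) + finrank 𝕜 (S x) := add_le_add ih hx
        _ = finrank 𝕜 ↥(S x ⊔ s.sup S) := by omega
  set W : Submodule 𝕜 E := Finset.univ.sup S with hW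
  have hWle : W ≤ span 𝕜 (Set.range F) := by
    rw [hW]
    apply Finset.sup_le
    intro i _
    rw [hSdef]
    apply span_le.mpr
    rintro _ ⟨t, rfl⟩
    exact subset_span ⟨_, rfl⟩
  have hex : ∃ i : Fin n, F (Sum.inl i) ∉ W := by
    by_contra hc
    push_neg at hc
    have hmem : ∀ i : Fin n, F (Sum.inl i) ∈ S i := by
      intro i
      have hWdecomp : W = S i ⊔ (Finset.univ.erase i).sup S := by
        rw [hW, ← Finset.sup_insert, Finset.insert_erase (Finset.mem_univ i)]
      have hxW := hc i
      rw [hWdecomp, Submodule.mem_sup] at hxW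
      obtain ⟨y, hy, z, hz, hyz⟩ := hxW
      have hxR : F (Sum.inl i) ∈ ((Finset.univ.erase i).sup S)ᗮ :=
        hkey _ _ (fun j hj => hapex i j (fun h => (Finset.ne_of_mem_erase hj) h.symm))
      have hSiR : S i ⟂ (Finset.univ.erase i).sup S := by
        rw [Finset.sup_eq_iSup, Submodule.isOrtho_iSup_right]
        intro j
        rw [Submodule.isOrtho_iSup_right]
        intro hj
        exact horth i j (fun h => (Finset.ne_of_mem_erase hj) h.symm)
      have hzy : (inner 𝕜 z y : 𝕜) = 0 :=
        (Submodule.mem_orthogonal _ _).mp (hSiR.le hy) z hz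
      have hzx : (inner 𝕜 z (F (Sum.inl i)) : 𝕜) = 0 :=
        (Submodule.mem_orthogonal _ _).mp hxR z hz
      have hz0 : z = 0 := by
        rw [← hyz, inner_add_right, hzy, zero_add] at hzx
        exact inner_self_eq_zero.mp hzx
      rw [← hyz, hz0, add_zero]
      exact hy
    have h01 : (⟨0, by omega⟩ : Fin n) ≠ ⟨1, by omega⟩ := by
      simp [Fin.ext_iff]
    have hx0 := hmem ⟨0, by omega⟩
    have hx1 := hmem ⟨1, by omega⟩
    have hinner0 : (inner 𝕜 (F (Sum.inl (⟨1, by omega⟩ : Fin n)))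
        (F (Sum.inl (⟨0, by omega⟩ : Fin n))) : 𝕜) = 0 :=
      (Submodule.mem_orthogonal _ _).mp ((horth _ _ h01).le hx0) _ hx1
    have hne : (Sum.inl (⟨1, by omega⟩ : Fin n) : Fin n ⊕ Fin n × Fin m) ≠
        Sum.inl ⟨0, by omega⟩ := by
      simp [Fin.ext_iff]
    have hadjtop : (corona (⊤ : SimpleGraph (Fin n)) T).Adj (Sum.inl ⟨1, by omega⟩)
        (Sum.inl ⟨0, by omega⟩) := by
      rw [corona_adj_inl_inl, SimpleGraph.top_adj]
      exact h01.symm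
    exact ((hpat _ _ hne).mpr hadjtop) hinner0
  obtain ⟨i, hi⟩ := hex
  have hlt : W < span 𝕜 (Set.range F) :=
    lt_of_le_of_ne hWle (fun h => hi (h ▸ subset_span ⟨Sum.inl i, rfl⟩))
  have hfin := Submodule.finrank_lt_finrank_of_lt hlt
  have hn' := hsup Finset.univ
  rw [Finset.card_univ, Fintype.card_fin] at hn'
  rw [← hW] at hn'
  omega



lemma coronaUp (n k : ℕ) (hn : 2 ≤ n) (T : SimpleGraph (Fin (k+2))) (hT : T.IsTree) :
    ∃ F : (Fin n ⊕ Fin n × Fin (k+2)) → EuclideanSpace 𝕜 ((Fin n × Fin (k+1)) ⊕ Unit),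
      Submodule.span 𝕜 (Set.range F) = ⊤ ∧
      ∀ i j, i ≠ j →
        ((inner 𝕜 (F i) (F j) : 𝕜) ≠ 0 ↔ (corona (⊤ : SimpleGraph (Fin n)) T).Adj i j) := by
  obtain ⟨y, u, hspan, hpat, hu⟩ := treeRep (𝕜 := 𝕜) k (Fintype.card_fin _) T hT
  set F : (Fin n ⊕ Fin n × Fin (k+2)) → EuclideanSpace 𝕜 ((Fin n × Fin (k+1)) ⊕ Unit) :=
    Sum.elim (fun i => embedBlock n i u + eU 𝕜 n (k+1))
      (fun p => embedBlock n p.1 (y p.2)) with hF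
  have hFinl : ∀ i, F (Sum.inl i) = embedBlock n i u + eU 𝕜 n (k+1) := fun i => rfl
  have hFinr : ∀ p : Fin n × Fin (k+2), F (Sum.inr p) = embedBlock n p.1 (y p.2) := fun p => rfl
  refine ⟨F, ?_, ?_⟩
  · -- spanning
    rw [← Submodule.orthogonal_eq_bot_iff, Submodule.eq_bot_iff]
    intro z hz
    have hzF : ∀ v, (inner 𝕜 z (F v) : 𝕜) = 0 := by
      intro v
      have h := hz (F v) (subset_span ⟨v, rfl⟩)
      rw [← inner_conj_symm, h, map_zero]
    have hblock : ∀ (i : Fin n) (x : EuclideanSpace 𝕜 (Fin (k+1))),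
        (inner 𝕜 z (embedBlock n i x) : 𝕜) = 0 := by
      intro i x
      have hx : x ∈ span 𝕜 (Set.range y) := hspan ▸ Submodule.mem_top
      induction hx using Submodule.span_induction with
      | mem w hw =>
        obtain ⟨t, rfl⟩ := hw
        have := hzF (Sum.inr (i, t))
        rwa [hFinr] at this
      | zero => rw [map_zero, inner_zero_right]
      | add a b ha hb iha ihb => rw [map_add, inner_add_right, iha, ihb, add_zero]
      | smul a x hx ihx => rw [map_smul, inner_smul_right, ihx, mul_zero]
    have hcomp_inl : ∀ (i : Fin n) (s : Fin (k+1)), z (Sum.inl (i, s)) = 0 := by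
      intro i s
      have h := hblock i (EuclideanSpace.single s 1)
      rw [inner_z_embed] at h
      have hsum : (∑ s' : Fin (k+1), (starRingEnd 𝕜) (z (Sum.inl (i, s')))
          * (EuclideanSpace.single s (1:𝕜)) s') = (starRingEnd 𝕜) (z (Sum.inl (i, s))) := by
        rw [Finset.sum_eq_single s]
        · simp [EuclideanSpace.single_apply]
        · intro s' _ hs'
          simp [EuclideanSpace.single_apply, hs']
        · intro hs; exact absurd (Finset.mem_univ s) hs
      rw [hsum] at h
      simpa using h
    have hcompU : z (Sum.inr ()) = 0 := by
      have h := hzF (Sum.inl ⟨0, by omega⟩)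
      rw [hFinl, inner_add_right, hblock, zero_add, inner_z_eU] at h
      simpa using h
    ext q
    rcases q with ⟨i, s⟩ | u'
    · exact hcomp_inl i s
    · cases u'; exact hcompU
  · -- pattern
    rintro (i | ⟨i, s⟩) (j | ⟨j, t⟩) hvw
    · have hij : i ≠ j := fun h => hvw (congrArg Sum.inl h)
      rw [hFinl, hFinl, inner_add_left, inner_add_right, inner_add_right,
        inner_embed_embed, inner_embed_eU, inner_eU_embed, inner_eU_eU, if_neg hij]
      rw [corona_adj_inl_inl, SimpleGraph.top_adj]
      simp only [zero_add, add_zero]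
      exact iff_of_true one_ne_zero hij
    · rw [hFinl, hFinr, inner_add_left, inner_embed_embed, inner_eU_embed, add_zero]
      rw [corona_adj_inl_inr]
      by_cases hij : i = j
      · rw [if_pos hij, hij]
        exact iff_of_true (hu t) rfl
      · rw [if_neg hij]
        exact iff_of_false (fun h => h rfl) hij
    · rw [hFinr, hFinl, inner_add_right, inner_embed_embed, inner_embed_eU, add_zero]
      rw [corona_adj_inr_inl]
      by_cases hij : i = j
      · rw [if_pos hij]
        refine iff_of_true ?_ hij.symm
        intro h0
        exact hu s (by rw [← inner_conj_symm, h0, map_zero])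
      · rw [if_neg hij]
        exact iff_of_false (fun h => h rfl) (fun h => hij h.symm)
    · have hne : ¬ (i = j ∧ s = t) := by
        rintro ⟨rfl, rfl⟩; exact hvw rfl
      rw [hFinr, hFinr, inner_embed_embed, corona_adj_inr_inr]
      by_cases hij : i = j
      · have hst : s ≠ t := fun h => hne ⟨hij, h⟩
        rw [if_pos hij, hpat s t hst]
        constructor
        · intro h; exact ⟨hij, h⟩
        · rintro ⟨-, h⟩; exact h
      · rw [if_neg hij]
        constructor
        · intro h; exact absurd rfl h
        · rintro ⟨h, -⟩; exact absurd h hij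

end CoronaSec

section GramSec
open Submodule Module Set Matrix
variable {𝕜 : Type} [RCLike 𝕜]

/-- The `v`-th column of a matrix, as a Euclidean vector. -/
def esCol {ι V : Type} (B : Matrix ι V 𝕜) (v : V) : EuclideanSpace 𝕜 ι := WithLp.toLp 2 (fun k => B k v)

lemma gram_entry {ι V : Type} [Fintype ι] (B : Matrix ι V 𝕜) (i j : V) :
    (Bᴴ * B) i j = (inner 𝕜 (esCol B i) (esCol B j) : 𝕜) := by
  simp [esCol, Matrix.mul_apply, Matrix.conjTranspose_apply, PiLp.inner_apply,
    RCLike.inner_apply]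
  exact Finset.sum_congr rfl fun _ _ => mul_comm _ _

lemma gram_rank {ι V : Type} [Fintype ι] [Fintype V] [DecidableEq V] (B : Matrix ι V 𝕜) :
    (Bᴴ * B).rank = finrank 𝕜 (span 𝕜 (Set.range (esCol B))) := by
  rw [Matrix.rank_conjTranspose_mul_self, Matrix.rank_eq_finrank_span_cols]
  have h : esCol B = (WithLp.linearEquiv 2 𝕜 (ι → 𝕜)).symm ∘ B.col := rfl
  rw [← LinearEquiv.finrank_map_eq (WithLp.linearEquiv 2 𝕜 (ι → 𝕜)).symm (Submodule.span 𝕜 (Set.range B.col)), Submodule.map_span, h, Set.range_comp]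
  rfl

lemma mrPlus_eq {V : Type} [Fintype V] [DecidableEq V] (G : SimpleGraph V) (d : ℕ)
    (ι : Type) [Fintype ι] [DecidableEq ι] (hcard : Fintype.card ι = d)
    (F : V → EuclideanSpace 𝕜 ι)
    (hspan : Submodule.span 𝕜 (Set.range F) = ⊤)
    (hpat : ∀ i j, i ≠ j → ((inner 𝕜 (F i) (F j) : 𝕜) ≠ 0 ↔ G.Adj i j))
    (hlow : ∀ (F' : V → EuclideanSpace 𝕜 V),
      (∀ i j, i ≠ j → ((inner 𝕜 (F' i) (F' j) : 𝕜) ≠ 0 ↔ G.Adj i j)) →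
      d ≤ finrank 𝕜 (span 𝕜 (Set.range F'))) :
    mrPlus 𝕜 G = d := by
  have hmem : d ∈ {r : ℕ | ∃ A : Matrix V V 𝕜, A.PosSemidef ∧
      (∀ i j : V, i ≠ j → (A i j ≠ 0 ↔ G.Adj i j)) ∧ A.rank = r} := by
    set B : Matrix ι V 𝕜 := Matrix.of (fun k v => F v k) with hB
    refine ⟨Bᴴ * B, Matrix.posSemidef_conjTranspose_mul_self B, ?_, ?_⟩
    · intro i j hij
      rw [gram_entry]
      exact hpat i j hij
    · rw [gram_rank]
      have heta : esCol B = F := rfl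
      rw [heta, hspan, finrank_top, finrank_euclideanSpace, hcard]
  have hle : mrPlus 𝕜 G ≤ d := Nat.sInf_le hmem
  have hge : d ≤ mrPlus 𝕜 G := by
    apply le_csInf ⟨d, hmem⟩
    rintro r ⟨A, hpsd, hApat, hrank⟩
    obtain ⟨B, rfl⟩ : ∃ B : Matrix V V 𝕜, A = Bᴴ * B := by
      open scoped MatrixOrder in
      exact CStarAlgebra.nonneg_iff_eq_star_mul_self.mp hpsd.nonneg
    have h1 : ∀ i j, i ≠ j → ((inner 𝕜 (esCol B i) (esCol B j) : 𝕜) ≠ 0 ↔ G.Adj i j) := by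
      intro i j hij
      rw [← gram_entry]
      exact hApat i j hij
    have h2 := hlow (esCol B) h1
    rw [gram_rank] at hrank
    rw [← hrank] at *
    exact h2
  omega


lemma mrPlus_corona_eq (𝕜 : Type) [RCLike 𝕜] (n k : ℕ) (hn : 2 ≤ n)
    (T : SimpleGraph (Fin (k+2))) (hT : T.IsTree) :
    mrPlus 𝕜 (corona (⊤ : SimpleGraph (Fin n)) T) = n * (k + 1) + 1 := by
  obtain ⟨F, hspan, hpat⟩ := coronaUp (𝕜 := 𝕜) n k hn T hT
  refine mrPlus_eq (corona (⊤ : SimpleGraph (Fin n)) T) (n * (k+1) + 1)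
    ((Fin n × Fin (k+1)) ⊕ Unit) ?_ F hspan hpat ?_
  · simp
  · intro F' hp
    exact coronaLB n (k+2) (by omega) hn T hT F' hp

end GramSec

/-- for a tree `T` of order `m ≥ 2` and `n ≥ 2`,
`mr₊(K_n ∘ T) = nm − n + 1`. -/
theorem mrPlus_corona_complete_tree (m n : ℕ) (hm : 2 ≤ m) (hn : 2 ≤ n)
    (T : SimpleGraph (Fin m)) (hT : T.IsTree) :
    mrPlus ℝ (corona (⊤ : SimpleGraph (Fin n)) T) = n * m - n + 1 ∧
    mrPlus ℂ (corona (⊤ : SimpleGraph (Fin n)) T) = n * m - n + 1 := by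
  obtain ⟨k, rfl⟩ : ∃ k, m = k + 2 := ⟨m - 2, by omega⟩
  have harith : n * (k + 2) - n + 1 = n * (k + 1) + 1 := by
    have h : n * (k + 2) = n * (k + 1) + n := by ring
    omega
  rw [harith]
  exact ⟨mrPlus_corona_eq ℝ n k hn T hT, mrPlus_corona_eq ℂ n k hn T hT⟩
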